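/- Let m₁ be a complex number and l a positive integer. Define Φ(T₁,…,T_l) = ∏_{j=1}^{l} T_j^{(-m₁+1)} (1-T_j)^{-2l} · ∏_{1≤i<j≤l} (T_i-T_j)². If (T₁⁰,…,T_l⁰) is a critical point of Φ (i.e. all partial derivatives of log Φ vanish), then the i-th elementary symmetric polynomial σ_i of T₁⁰,…,T_l⁰ equals binom(l,i) · ∏_{j=1}^{i} (-m₁+1+l-j)/(-m₁-j), provided all numerators and denominators are nonzero. -/

import Mathlib

open Finset Polynomial

/-- At a critical point of the 2-particle trigonometric master function
`Φ(T) = ∏ⱼ Tⱼ^(1-m₁) (1-Tⱼ)^(-2l) ∏_{i<j} (Tᵢ-Tⱼ)²` (i.e. a solution of the Bethe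
Ansatz equations `∂(log Φ)/∂Tᵢ = 0`), the `i`-th elementary symmetric polynomial of the
coordinates equals `binom(l,i) ∏_{j=1}^{i} (-m₁+1+l-j)/(-m₁-j)`, provided all numerators
and denominators are nonzero. -/
theorem elementary_symmetric_of_bethe_critical_point
    (l : ℕ) (hl : 0 < l) (m₁ : ℂ) (T : Fin l → ℂ)
    (hT0 : ∀ i, T i ≠ 0) (hT1 : ∀ i, T i ≠ 1)
    (hTd : ∀ i j, i ≠ j → T i ≠ T j)
    (hBethe : ∀ i, (1 - m₁) / T i + 2 * (l : ℂ) / (1 - T i)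
      + ∑ j ∈ univ.erase i, 2 / (T i - T j) = 0)
    (hnum : ∀ j ∈ Finset.Icc 1 l, -m₁ + 1 + (l : ℂ) - (j : ℂ) ≠ 0)
    (hden : ∀ j ∈ Finset.Icc 1 l, -m₁ - (j : ℂ) ≠ 0) :
    ∀ i ∈ Finset.Icc 1 l,
      ∑ s ∈ Finset.powersetCard i (univ : Finset (Fin l)), ∏ j ∈ s, T j
        = (Nat.choose l i : ℂ) *
            ∏ j ∈ Finset.Icc 1 i, (-m₁ + 1 + (l : ℂ) - (j : ℂ)) / (-m₁ - (j : ℂ)) := by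
  classical
  set p : ℂ[X] := ∏ j : Fin l, (X - C (T j)) with hp
  have hmonic : p.Monic := monic_prod_of_monic _ _ fun i _ => monic_X_sub_C _
  have hdeg : p.natDegree = l := by
    rw [hp, natDegree_prod_of_monic _ _ fun i _ => monic_X_sub_C _]
    simp
  have hctop : p.coeff l = 1 := by rw [← hdeg]; exact hmonic.coeff_natDegree
  have hcgt : ∀ n, l < n → p.coeff n = 0 := fun n hn =>
    coeff_eq_zero_of_natDegree_lt (hdeg ▸ hn)
  set q : ℂ[X] := X * ((1 - X) * (derivative (derivative p)))
      + C (1 - m₁) * derivative p + C (2*l+m₁-1) * (X * derivative p)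
      - C ((l:ℂ)*(m₁+l)) * p with hq
  -- q vanishes at every T i
  have heval : ∀ i, q.eval (T i) = 0 := by
    intro i
    set g : ℂ[X] := ∏ j ∈ univ.erase i, (X - C (T j)) with hg
    have hpg : p = (X - C (T i)) * g := (Finset.mul_prod_erase _ _ (mem_univ i)).symm
    have hGne : ∀ j ∈ univ.erase i, T i - T j ≠ 0 := by
      intro j hj
      exact sub_ne_zero.mpr (hTd i j (by simpa [eq_comm] using (mem_erase.mp hj).1))
    set G : ℂ := ∏ j ∈ univ.erase i, (T i - T j) with hGdef
    have hgeval : g.eval (T i) = G := by simp [hg, hGdef, eval_prod]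
    have hg' : (derivative g).eval (T i)
        = ∑ j ∈ univ.erase i, ∏ k ∈ (univ.erase i).erase j, (T i - T k) := by
      rw [hg, Finset.prod_eq_multiset_prod, derivative_prod]
      rw [show (Polynomial.eval (T i) : ℂ[X] → ℂ) = (Polynomial.evalRingHom (T i) : ℂ[X] → ℂ) from rfl,
        map_multiset_sum (Polynomial.evalRingHom (T i)), Multiset.map_map]
      rw [Finset.sum_eq_multiset_sum]
      congr 1
      apply Multiset.map_congr rfl
      intro j hj
      simp only [Function.comp_apply, derivative_sub, derivative_X, derivative_C, sub_zero,
        mul_one, coe_evalRingHom, eval_mul, eval_multiset_prod, Multiset.map_map]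
      rw [← Finset.erase_val, ← Finset.prod_eq_multiset_prod]
      simp [eval_prod]
    have hterm : ∀ j ∈ univ.erase i, ∏ k ∈ (univ.erase i).erase j, (T i - T k)
        = G * (T i - T j)⁻¹ := by
      intro j hj
      rw [hGdef, ← Finset.mul_prod_erase _ _ hj]
      field_simp [hGne j hj]
    have hg'2 : (derivative g).eval (T i) = ∑ j ∈ univ.erase i, G * (T i - T j)⁻¹ := by
      rw [hg']; exact Finset.sum_congr rfl hterm
    have h0 : T i ≠ 0 := hT0 i
    have h1 : (1 : ℂ) - T i ≠ 0 := sub_ne_zero.mpr (Ne.symm (hT1 i))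
    have key : (1-m₁)*(1-T i)*G + 2*l*(T i)*G
        + T i*(1-T i)*(∑ j ∈ univ.erase i, 2 / (T i - T j))*G = 0 := by
      have hB := hBethe i
      have h2 := congrArg (fun z => T i * (1 - T i) * G * z) hB
      simp only [mul_zero] at h2
      rw [← h2]
      field_simp
    have hsum : (∑ j ∈ univ.erase i, 2 / (T i - T j)) * G
        = 2 * (derivative g).eval (T i) := by
      rw [hg'2, Finset.sum_mul, Finset.mul_sum]
      apply Finset.sum_congr rfl
      intro j hj
      field_simp [hGne j hj]
    have e1 : eval (T i) (derivative p) = G := by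
      rw [hpg, derivative_mul]
      simp [hgeval]
    have e2 : eval (T i) (derivative (derivative p)) = 2 * (derivative g).eval (T i) := by
      rw [hpg]
      simp only [derivative_mul, derivative_sub, derivative_add, derivative_X, derivative_C,
        derivative_one, sub_zero, one_mul, zero_mul, eval_add, eval_mul, eval_sub, eval_X,
        eval_C, eval_zero, eval_one, sub_self, mul_zero, add_zero, zero_add]
      ring
    have hqe : q.eval (T i)
        = T i * (1 - T i) * (2 * (derivative g).eval (T i))
          + ((1-m₁) + (2*l+m₁-1) * T i) * G := by
      rw [hq]
      simp only [eval_add, eval_sub, eval_mul, eval_one, eval_X, eval_C, e1, e2]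
      rw [hpg]
      simp only [eval_mul, eval_sub, eval_X, eval_C, sub_self, zero_mul]
      ring
    rw [hqe]
    have h3 : T i*(1-T i)*(∑ j ∈ univ.erase i, 2 / (T i - T j))*G
        = T i * (1 - T i) * (2 * (derivative g).eval (T i)) := by
      rw [mul_assoc, hsum]
    linear_combination key - h3
  -- coefficients of q
  have hXmul0 : ∀ r : ℂ[X], (X * r).coeff 0 = 0 := by
    intro r; rw [mul_coeff_zero, coeff_X_zero, zero_mul]
  have hcoeffq : ∀ n : ℕ, q.coeff n
      = ((n:ℂ)+1)*((n:ℂ)+1-m₁)*p.coeff (n+1) - ((n:ℂ)-l)*((n:ℂ)-l-m₁)*p.coeff n := by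
    intro n
    have hsplit : (1 - X) * (derivative (derivative p))
        = derivative (derivative p) - X * derivative (derivative p) := by ring
    match n with
    | 0 =>
      simp only [hq, coeff_sub, coeff_add, hXmul0, coeff_C_mul, coeff_derivative]
      push_cast
      ring
    | 1 =>
      simp only [hq, hsplit, coeff_sub, coeff_add, coeff_C_mul, coeff_X_mul, hXmul0,
        coeff_derivative]
      push_cast
      ring
    | (k+2) =>
      simp only [hq, hsplit, coeff_sub, coeff_add, coeff_C_mul, coeff_X_mul,
        coeff_derivative]
      push_cast
      ring
  -- q = 0
  have hqz : q = 0 := by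
    have hTinj : Function.Injective T := by
      intro a b hab
      by_contra hne
      exact hTd a b hne hab
    have hcz : ∀ m : ℕ, l ≤ m → q.coeff m = 0 := by
      intro m hm
      rw [hcoeffq]
      rcases eq_or_lt_of_le hm with h | h
      · subst h
        rw [hcgt (l+1) (by omega)]
        ring
      · rw [hcgt (m+1) (by omega), hcgt m h]
        ring
    rcases eq_or_ne q 0 with h | h
    · exact h
    · refine eq_zero_of_natDegree_lt_card_of_eval_eq_zero q hTinj heval ?_
      rw [Fintype.card_fin, natDegree_lt_iff_degree_lt h]
      exact (degree_lt_iff_coeff_zero q l).mpr fun m hm => hcz m hm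
  have hrec : ∀ n : ℕ, ((n:ℂ)+1)*((n:ℂ)+1-m₁)*p.coeff (n+1)
      = ((n:ℂ)-l)*((n:ℂ)-l-m₁)*p.coeff n := by
    intro n
    have h := hcoeffq n
    rw [hqz, coeff_zero] at h
    linear_combination -h
  -- main induction
  have main : ∀ i, i ≤ l → ((-1:ℂ))^i * p.coeff (l-i)
      = (Nat.choose l i : ℂ) * ∏ j ∈ Finset.Icc 1 i,
          (-m₁ + 1 + (l:ℂ) - (j:ℂ)) / (-m₁ - (j:ℂ)) := by
    intro i
    induction i with
    | zero => intro _; simp [hctop]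
    | succ i ih =>
      intro hi1
      have hi : i ≤ l := le_trans (Nat.le_succ i) hi1
      have ihv := ih hi
      have hr := hrec (l - i - 1)
      have hnat1 : l - i - 1 + 1 = l - i := by omega
      have hc1 : ((l - i - 1 : ℕ) : ℂ) = (l:ℂ) - i - 1 := by
        have h' : (l - i - 1 : ℕ) = l - (i+1) := by omega
        rw [h', Nat.cast_sub hi1]
        push_cast
        ring
      rw [hnat1, hc1] at hr
      have hd1 : ((i:ℂ)+1) ≠ 0 := Nat.cast_add_one_ne_zero i
      have hd2 : (-m₁-(((i:ℕ)+1:ℕ):ℂ)) ≠ 0 := hden (i+1) (by rw [mem_Icc]; omega)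
      have hd2' : ((i:ℂ)+1+m₁) ≠ 0 := by
        intro h
        apply hd2
        push_cast
        linear_combination -h
      have hch : ((Nat.choose l (i+1) : ℕ):ℂ) * ((i:ℂ)+1)
          = (Nat.choose l i : ℂ) * ((l:ℂ) - i) := by
        have h1 := congrArg (Nat.cast : ℕ → ℂ) (Nat.choose_succ_right_eq l i)
        push_cast [Nat.cast_sub hi] at h1
        linear_combination h1
      rw [Finset.prod_Icc_succ_top (by omega : 1 ≤ i+1)]
      have hnat2 : l - (i+1) = l - i - 1 := by omega
      rw [hnat2]
      -- solve for p.coeff (l-i-1) from hr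
      have hc2 : p.coeff (l-i-1)
          = ((l:ℂ)-i)*((l:ℂ)-i-m₁)*p.coeff (l-i) / (((i:ℂ)+1)*((i:ℂ)+1+m₁)) := by
        rw [eq_div_iff (mul_ne_zero hd1 hd2')]
        linear_combination -hr
      have hsq : ((-1:ℂ))^i * (-1)^i = 1 := by
        rw [← pow_add]
        exact Even.neg_one_pow ⟨i, by ring⟩
      have hc1' : p.coeff (l-i) = (-1)^i * ((Nat.choose l i : ℂ)
          * ∏ j ∈ Finset.Icc 1 i, (-m₁ + 1 + (l:ℂ) - (j:ℂ)) / (-m₁ - (j:ℂ))) := by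
        rw [← ihv, ← mul_assoc, hsq, one_mul]
      have hd3 : (-m₁ - ((i:ℂ)+1)) ≠ 0 := by push_cast at hd2; exact hd2
      rw [hc2, hc1']
      push_cast
      have hPd : (∏ x ∈ Finset.Icc 1 i, (-m₁ - (x:ℂ))) ≠ 0 :=
        Finset.prod_ne_zero_iff.mpr fun j hj => hden j (by
          rw [mem_Icc] at hj ⊢; omega)
      have ha : ((i:ℂ)+1) * ((i:ℂ)+1)⁻¹ = 1 := mul_inv_cancel₀ hd1
      have hdb : (-m₁ - ((i:ℂ)+1))⁻¹ = -((i:ℂ)+1+m₁)⁻¹ := by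
        rw [show (-m₁ - ((i:ℂ)+1)) = -((i:ℂ)+1+m₁) by ring, inv_neg]
      have hab : (((i:ℂ)+1) * ((i:ℂ)+1+m₁))⁻¹ = ((i:ℂ)+1)⁻¹ * ((i:ℂ)+1+m₁)⁻¹ := mul_inv _ _
      linear_combination
        (-((l:ℂ)-i)*((l:ℂ)-i-m₁)*(l.choose i:ℂ)
          *(∏ x ∈ Finset.Icc 1 i, (-m₁ + 1 + (l:ℂ) - (x:ℂ)) / (-m₁ - (x:ℂ)))
          *((-1:ℂ)^i*(-1)^i))*hab
        + (-((l:ℂ)-i)*((l:ℂ)-i-m₁)*(l.choose i:ℂ)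
          *(∏ x ∈ Finset.Icc 1 i, (-m₁ + 1 + (l:ℂ) - (x:ℂ)) / (-m₁ - (x:ℂ)))
          *((i:ℂ)+1)⁻¹*((i:ℂ)+1+m₁)⁻¹)*hsq
        + ((∏ x ∈ Finset.Icc 1 i, (-m₁ + 1 + (l:ℂ) - (x:ℂ)) / (-m₁ - (x:ℂ)))*((l:ℂ)-i-m₁)
          *((i:ℂ)+1)⁻¹*((i:ℂ)+1+m₁)⁻¹)*hch
        - ((l.choose (i+1):ℂ)*(∏ x ∈ Finset.Icc 1 i, (-m₁ + 1 + (l:ℂ) - (x:ℂ)) / (-m₁ - (x:ℂ)))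
          *((l:ℂ)-i-m₁)*((i:ℂ)+1+m₁)⁻¹)*ha
        - ((l.choose (i+1):ℂ)*(∏ x ∈ Finset.Icc 1 i, (-m₁ + 1 + (l:ℂ) - (x:ℂ)) / (-m₁ - (x:ℂ)))
          *((l:ℂ)-i-m₁))*hdb
  -- Vieta
  have hvieta : ∀ i, i ≤ l → ∑ s ∈ Finset.powersetCard i (univ : Finset (Fin l)), ∏ j ∈ s, T j
      = (-1:ℂ)^i * p.coeff (l - i) := by
    intro i hi
    have hcard : Multiset.card ((univ : Finset (Fin l)).val.map T) = l := by simp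
    have hV := Multiset.prod_X_sub_C_coeff ((univ : Finset (Fin l)).val.map T)
      (k := l - i) (by rw [hcard]; omega)
    rw [hcard] at hV
    have hpm : p = (((univ : Finset (Fin l)).val.map T).map fun t => X - C t).prod := by
      rw [hp, Finset.prod_eq_multiset_prod, Multiset.map_map]
      rfl
    rw [← hpm] at hV
    have hli : l - (l - i) = i := by omega
    rw [hli] at hV
    rw [hV, Finset.esymm_map_val]
    rw [← mul_assoc, ← pow_add]
    have : Even (i + i) := ⟨i, by ring⟩
    rw [this.neg_one_pow, one_mul]
  intro i hi
  rw [mem_Icc] at hi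
  rw [hvieta i hi.2, main i hi.2]
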